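/- Let j ≥ 1/2 be a half-integer, d = 2j+1, and let p : {0,1,...,2j} → [0,1] be a probability distribution (∑_L p_L = 1). Define u := (d²·∑_L p_L²/(2L+1) − 1)/(d²−1) and Δ := (∑_L p_L·L(L+1))²/(8j(j+1)²). Then √Δ ≤ (3√2·j^{3/2}/(2j+1))·(1−u). -/

import Mathlib

theorem stmt_3 (n : ℕ) (hn : 1 ≤ n) (j : ℝ) (hj : j = n / 2)
    (p : ℕ → ℝ) (hp0 : ∀ L, 0 ≤ p L) (hp1 : ∀ L, p L ≤ 1)
    (hsum : ∑ L ∈ Finset.range (n + 1), p L = 1)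
    (d : ℝ) (hd : d = 2 * j + 1)
    (u : ℝ) (hu : u = (d ^ 2 * ∑ L ∈ Finset.range (n + 1), p L ^ 2 / (2 * L + 1) - 1) / (d ^ 2 - 1))
    (Δ : ℝ) (hΔ : Δ = (∑ L ∈ Finset.range (n + 1), p L * (L * (L + 1))) ^ 2 / (8 * j * (j + 1) ^ 2)) :
    Real.sqrt Δ ≤ (3 * Real.sqrt 2 * j ^ ((3 : ℝ) / 2)) / (2 * j + 1) * (1 - u) := by
  have hm1 : (1:ℝ) ≤ n := by exact_mod_cast hn
  have hjpos : 0 < j := by rw [hj]; linarith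
  set A := ∑ L ∈ Finset.range (n + 1), p L * (L * (L + 1)) with hA
  set S2 := ∑ L ∈ Finset.range (n + 1), p L ^ 2 / (2 * L + 1) with hS2
  set B := 1 - S2 with hB
  have hA0 : 0 ≤ A := by
    apply Finset.sum_nonneg
    intro L _
    have : (0:ℝ) ≤ (L:ℝ) := Nat.cast_nonneg L
    have := hp0 L
    positivity
  have hBsum : B = ∑ L ∈ Finset.range (n + 1), (p L - p L ^ 2 / (2 * L + 1)) := by
    rw [hB, hS2, ← hsum, Finset.sum_sub_distrib]
  have hterm : ∀ L ∈ Finset.range (n + 1),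
      p L * (L * (L + 1)) ≤ 3 * j * (2 * j + 1) * (p L - p L ^ 2 / (2 * L + 1)) := by
    intro L hL
    have hLn : (L:ℝ) ≤ n := by
      exact_mod_cast Nat.le_of_lt_succ (Finset.mem_range.mp hL)
    have hc0 : (0:ℝ) ≤ (L:ℝ) := Nat.cast_nonneg L
    have hden : (0:ℝ) < 2 * L + 1 := by linarith
    have hx0 := hp0 L
    have hx1 := hp1 L
    have hdiv : p L - p L ^ 2 / (2 * L + 1) = (p L * (2 * L + 1) - p L ^ 2) / (2 * L + 1) := by
      field_simp
    rw [hdiv, hj, ← mul_div_assoc, le_div_iff₀ hden]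
    set c := (L:ℝ)
    set m := (n:ℝ)
    set x := p L
    have hpoly : 0 ≤ 3 * m * (m + 1) - (c + 1) * (2 * c + 1) := by
      nlinarith [mul_nonneg (sub_nonneg.2 hLn) (by linarith : (0:ℝ) ≤ m + c)]
    nlinarith [mul_nonneg (mul_nonneg hx0 hc0) hpoly,
      mul_nonneg (mul_nonneg (by nlinarith : (0:ℝ) ≤ 3 * m * (m + 1)) hx0) (sub_nonneg.2 hx1)]
  have hkey : A ≤ 3 * j * (2 * j + 1) * B := by
    rw [hBsum, Finset.mul_sum]
    exact Finset.sum_le_sum hterm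
  have hB0 : 0 ≤ B := by
    rw [hBsum]
    apply Finset.sum_nonneg
    intro L _
    have hx0 := hp0 L
    have hx1 := hp1 L
    have h1 : p L ^ 2 / (2 * (L:ℝ) + 1) ≤ p L ^ 2 :=
      div_le_self (sq_nonneg _) (by have : (0:ℝ) ≤ (L:ℝ) := Nat.cast_nonneg L; linarith)
    nlinarith
  have hne1 : (2 * j + 1) ≠ 0 := by positivity
  have h1u : 1 - u = (2 * j + 1) ^ 2 * B / (4 * j * (j + 1)) := by
    rw [hu, hd, hB, hS2]
    have h2 : ((2 * j + 1) ^ 2 - 1) = 4 * j * (j + 1) := by ring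
    have h3 : (4 * j * (j + 1)) ≠ 0 := by positivity
    rw [h2]
    field_simp
    ring
  have h1u0 : 0 ≤ 1 - u := by
    rw [h1u]
    positivity
  have hs2 : Real.sqrt j ^ 2 = j := Real.sq_sqrt hjpos.le
  have ht2 : Real.sqrt 2 ^ 2 = 2 := Real.sq_sqrt (by norm_num)
  have hs0 : 0 ≤ Real.sqrt j := Real.sqrt_nonneg j
  have ht0 : 0 ≤ Real.sqrt 2 := Real.sqrt_nonneg 2
  have hrpow : j ^ ((3:ℝ)/2) = j * Real.sqrt j := by
    rw [show (3:ℝ)/2 = 1 + 1/2 by norm_num, Real.rpow_add hjpos, Real.rpow_one,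
      Real.sqrt_eq_rpow]
  set R := (3 * Real.sqrt 2 * j ^ ((3 : ℝ) / 2)) / (2 * j + 1) * (1 - u) with hR
  have hR0 : 0 ≤ R := by
    rw [hR]
    have : 0 ≤ j ^ ((3:ℝ)/2) := Real.rpow_nonneg hjpos.le _
    positivity
  have hΔR : Δ ≤ R ^ 2 := by
    have hA2 : A ^ 2 ≤ (3 * j * (2 * j + 1) * B) ^ 2 :=
      pow_le_pow_left₀ hA0 hkey 2
    have h5 : (3 * Real.sqrt 2 * (j * Real.sqrt j)) ^ 2 = 18 * j ^ 3 := by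
      have h6 : (3 * Real.sqrt 2 * (j * Real.sqrt j)) ^ 2
          = 9 * Real.sqrt 2 ^ 2 * j ^ 2 * Real.sqrt j ^ 2 := by ring
      rw [h6, ht2, hs2]; ring
    have hRsq : R ^ 2 = (3 * j * (2 * j + 1) * B) ^ 2 / (8 * j * (j + 1) ^ 2) := by
      rw [hR, hrpow, h1u, mul_pow, div_pow, h5]
      have h3 : (4 * j * (j + 1)) ≠ 0 := by positivity
      have h4 : (j + 1) ≠ 0 := by positivity
      field_simp
      ring
    rw [hΔ, hRsq]
    have hD : (0:ℝ) < 8 * j * (j + 1) ^ 2 := by positivity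
    exact (div_le_div_iff_of_pos_right hD).mpr hA2
  calc Real.sqrt Δ ≤ Real.sqrt (R ^ 2) := Real.sqrt_le_sqrt hΔR
    _ = R := Real.sqrt_sq hR0
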